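/- Let e ∈ {0,1}^n, εᵢ ∈ {−1,0,1}, and let B₁,...,Bₙ be i.i.d. uniform on {1,...,B} with B = 2^{(1/2+ε)n²}, B₀ = ∑ᵢBᵢeᵢ. For n sufficiently large, with probability at least 1 − O(2^{−εn²/2}), every nonzero vector x = (x₀; x'₀; x₁;...;xₙ) in the lattice generated by the noisy matrix (first row (B₀, −B₁−ε₁,...,−Bₙ−εₙ), identity below) with ‖x‖ ≤ 3·2^{n/2}n^{1/2} is an integer multiple of (f₀; 1; e), where f₀ = −∑ᵢεᵢeᵢ. -/
import Mathlib
open scoped Classical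

theorem aux_card_linear {n : ℕ} (B : ℕ) (c : Fin n → ℤ) (i₀ : Fin n)
    (hc : c i₀ ≠ 0) (d : ℤ) :
    ((Fintype.piFinset fun _ : Fin n => Finset.Icc (1 : ℤ) (B : ℤ)).filter
      (fun b => ∑ i, b i * c i = d)).card ≤ B ^ (n - 1) := by
  classical
  set T := Fintype.piFinset (fun i : Fin n =>
    if i = i₀ then ({1} : Finset ℤ) else Finset.Icc (1 : ℤ) (B : ℤ)) with hT
  have hmap : ∀ b ∈ ((Fintype.piFinset fun _ : Fin n => Finset.Icc (1 : ℤ) (B : ℤ)).filter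
      (fun b => ∑ i, b i * c i = d)), Function.update b i₀ 1 ∈ T := by
    intro b hb
    rw [Finset.mem_filter] at hb
    rw [Fintype.mem_piFinset]
    intro i
    by_cases h : i = i₀
    · subst h; simp [Function.update_self]
    · simp only [Function.update_of_ne h, if_neg h]
      exact (Fintype.mem_piFinset.1 hb.1 i)
  have hinj : Set.InjOn (fun b : Fin n → ℤ => Function.update b i₀ 1)
      (((Fintype.piFinset fun _ : Fin n => Finset.Icc (1 : ℤ) (B : ℤ)).filter
        (fun b => ∑ i, b i * c i = d)) : Finset (Fin n → ℤ)) := by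
    intro b hb b' hb' hbb
    simp only [Finset.coe_filter, Set.mem_setOf_eq] at hb hb'
    have hne : ∀ i, i ≠ i₀ → b i = b' i := by
      intro i hi
      have := congrFun hbb i
      simpa [Function.update_of_ne hi] using this
    have hsum : b i₀ * c i₀ = b' i₀ * c i₀ := by
      have h1 : ∑ i, b i * c i = ∑ i, b' i * c i := hb.2.trans hb'.2.symm
      rw [← Finset.add_sum_erase _ _ (Finset.mem_univ i₀),
        ← Finset.add_sum_erase _ _ (Finset.mem_univ i₀)] at h1
      have h2 : ∑ i ∈ Finset.univ.erase i₀, b i * c i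
          = ∑ i ∈ Finset.univ.erase i₀, b' i * c i := by
        apply Finset.sum_congr rfl
        intro i hi
        rw [hne i (Finset.ne_of_mem_erase hi)]
      omega
    have : b i₀ = b' i₀ := mul_right_cancel₀ hc hsum
    funext i
    by_cases h : i = i₀
    · rw [h]; exact this
    · exact hne i h
  calc ((Fintype.piFinset fun _ : Fin n => Finset.Icc (1 : ℤ) (B : ℤ)).filter
      (fun b => ∑ i, b i * c i = d)).card ≤ T.card :=
        Finset.card_le_card_of_injOn _ hmap hinj
    _ = B ^ (n - 1) := by
        rw [hT, Fintype.card_piFinset]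
        have : ∀ i : Fin n, (if i = i₀ then ({1} : Finset ℤ) else
            Finset.Icc (1 : ℤ) (B : ℤ)).card = if i = i₀ then 1 else B := by
          intro i
          by_cases h : i = i₀ <;> simp [h, Int.card_Icc]
        rw [Finset.prod_congr rfl (fun i _ => this i)]
        rw [← Finset.mul_prod_erase _ _ (Finset.mem_univ i₀)]
        simp only [if_pos rfl, one_mul]
        rw [Finset.prod_ite_of_false]
        · rw [Finset.prod_const, Finset.card_erase_of_mem (Finset.mem_univ i₀),
            Finset.card_univ, Fintype.card_fin]
          simp
        · intro i hi; exact Finset.ne_of_mem_erase hi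

theorem aux_growth (δ : ℝ) (hδ : 0 < δ) :
    ∀ᶠ n : ℕ in Filter.atTop, (n : ℝ) ≤ (2 : ℝ) ^ (δ * n) := by
  have h := Real.isLittleO_log_id_atTop.def (by positivity : (0:ℝ) < δ * Real.log 2)
  have h2 := (tendsto_natCast_atTop_atTop (R := ℝ)).eventually h
  filter_upwards [h2, Filter.eventually_ge_atTop 1] with n hn hn1
  have hn1' : (1:ℝ) ≤ (n:ℝ) := by exact_mod_cast hn1
  have hlog : Real.log n ≤ δ * Real.log 2 * n := by
    have := hn
    simp only [Real.norm_eq_abs, id] at this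
    have habs : |Real.log n| = Real.log n := abs_of_nonneg (Real.log_nonneg hn1')
    have hnn : |(n:ℝ)| = (n:ℝ) := abs_of_nonneg (by positivity)
    rw [habs, hnn] at this
    exact this
  calc (n:ℝ) = Real.exp (Real.log n) := (Real.exp_log (by positivity)).symm
    _ ≤ Real.exp (δ * n * Real.log 2) := by
        apply Real.exp_le_exp.2; linarith
    _ = (2:ℝ) ^ (δ * n) := by
        rw [Real.rpow_def_of_pos (by norm_num : (0:ℝ) < 2)]; ring_nf

set_option maxHeartbeats 1000000

/-- Noisy version: with noise `εᵢ ∈ {-1,0,1}` added to the `Bᵢ` in the lattice matrix and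
`B = 2^((1/2+ε)n²)`, for `n` large, with probability at least `1 - C·2^(-εn²/2)` every nonzero
vector of the noisy lattice of norm at most `3·2^(n/2)·n^(1/2)` is an integer multiple of
`(f₀; 1; e)` where `f₀ = -∑ εᵢeᵢ`. -/
theorem noisy_subset_sum_lattice_success (ε : ℝ) (hε : 0 < ε) :
    ∃ C : ℝ, 0 < C ∧ ∃ n₀ : ℕ, ∀ n : ℕ, n₀ ≤ n →
      ∀ e : Fin n → ℤ, (∀ i, e i = 0 ∨ e i = 1) →
      ∀ εv : Fin n → ℤ, (∀ i, εv i = -1 ∨ εv i = 0 ∨ εv i = 1) →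
      ∀ B : ℕ, (B : ℝ) = (2 : ℝ) ^ ((1 / 2 + ε) * (n : ℝ) ^ 2) →
      (1 : ℝ) - C * (2 : ℝ) ^ (-(ε * (n : ℝ) ^ 2) / 2) ≤
        ((Finset.filter (fun b : Fin n → ℤ =>
            ∀ v : Fin (n + 2) → ℤ,
              v 0 = (∑ i, b i * e i) * v 1 - ∑ i : Fin n, (b i + εv i) * v i.succ.succ →
              v ≠ 0 →
              Real.sqrt (∑ j, ((v j : ℤ) : ℝ) ^ 2) ≤
                3 * (2 : ℝ) ^ ((n : ℝ) / 2) * (n : ℝ) ^ ((1 : ℝ) / 2) →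
              ∃ k : ℤ,
                v = k • (Fin.cons (-∑ i, εv i * e i) (Fin.cons 1 e) : Fin (n + 2) → ℤ))
          (Fintype.piFinset fun _ : Fin n => Finset.Icc (1 : ℤ) (B : ℤ))).card : ℝ) /
          (B : ℝ) ^ n := by
  refine ⟨1, one_pos, ?_⟩
  have hev : ∀ᶠ n : ℕ in Filter.atTop,
      ((n:ℝ) ≤ (2:ℝ) ^ ((ε/8) * n) ∧ 7 ≤ n ∧ 4/ε + 2 ≤ (n:ℝ)) := by
    filter_upwards [aux_growth (ε/8) (by positivity), Filter.eventually_ge_atTop 7,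
      (tendsto_natCast_atTop_atTop (R := ℝ)).eventually
        (Filter.eventually_ge_atTop (4/ε + 2))] with n h1 h2 h3
    exact ⟨h1, h2, h3⟩
  obtain ⟨n₀, hn₀⟩ := Filter.eventually_atTop.mp hev
  refine ⟨max n₀ 1, ?_⟩
  intro n hn e he εv hεv B hB
  obtain ⟨hgrow, h7, hbig⟩ := hn₀ n (le_trans (le_max_left _ _) hn)
  have hn1 : 1 ≤ n := le_trans (le_max_right _ _) hn
  have hn1' : (1:ℝ) ≤ (n:ℝ) := by exact_mod_cast hn1
  -- basic positivity facts
  set m : ℝ := 3 * (2 : ℝ) ^ ((n : ℝ) / 2) * (n : ℝ) ^ ((1 : ℝ) / 2) with hm_def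
  have hpow1 : (1:ℝ) ≤ (2:ℝ) ^ ((n:ℝ)/2) := by
    rw [show (1:ℝ) = (2:ℝ) ^ (0:ℝ) by rw [Real.rpow_zero]]
    exact Real.rpow_le_rpow_of_exponent_le one_le_two (by positivity)
  have hsqrt1 : (1:ℝ) ≤ (n:ℝ) ^ ((1:ℝ)/2) := Real.one_le_rpow hn1' (by norm_num)
  have hm3 : 3 ≤ m := by
    rw [hm_def]
    nlinarith
  have hm0 : 0 ≤ m := by linarith
  set M : ℤ := ⌊m⌋ with hM_def
  have hM3 : 3 ≤ M := Int.le_floor.2 (by exact_mod_cast hm3)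
  have hMr : (M:ℝ) ≤ m := Int.floor_le m
  -- B bounds
  have hBR : (1:ℝ) ≤ (B:ℝ) := by
    rw [hB, show (1:ℝ) = (2:ℝ) ^ (0:ℝ) by rw [Real.rpow_zero]]
    exact Real.rpow_le_rpow_of_exponent_le one_le_two (by positivity)
  have hB1 : 1 ≤ B := by exact_mod_cast hBR
  set S := Fintype.piFinset fun _ : Fin n => Finset.Icc (1 : ℤ) (B : ℤ) with hS_def
  set P : (Fin n → ℤ) → Prop := fun b =>
    ∀ v : Fin (n + 2) → ℤ,
      v 0 = (∑ i, b i * e i) * v 1 - ∑ i : Fin n, (b i + εv i) * v i.succ.succ →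
      v ≠ 0 →
      Real.sqrt (∑ j, ((v j : ℤ) : ℝ) ^ 2) ≤ m →
      ∃ k : ℤ,
        v = k • (Fin.cons (-∑ i, εv i * e i) (Fin.cons 1 e) : Fin (n + 2) → ℤ)
    with hP_def
  -- the equation transformation
  have heq : ∀ (b : Fin n → ℤ) (v : Fin (n+2) → ℤ),
      (v 0 = (∑ i, b i * e i) * v 1 - ∑ i : Fin n, (b i + εv i) * v i.succ.succ) ↔
      (∑ i, b i * (e i * v 1 - v i.succ.succ) = v 0 + ∑ i, εv i * v i.succ.succ) := by
    intro b v
    have h1 : (∑ i, b i * e i) * v 1 = ∑ i, b i * (e i * v 1) := by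
      rw [Finset.sum_mul]; apply Finset.sum_congr rfl; intros; ring
    have h2 : ∑ i : Fin n, (b i + εv i) * v i.succ.succ
        = ∑ i, b i * v i.succ.succ + ∑ i, εv i * v i.succ.succ := by
      rw [← Finset.sum_add_distrib]; apply Finset.sum_congr rfl; intros; ring
    have h3 : ∑ i, b i * (e i * v 1 - v i.succ.succ)
        = ∑ i, b i * (e i * v 1) - ∑ i, b i * v i.succ.succ := by
      rw [← Finset.sum_sub_distrib]; apply Finset.sum_congr rfl; intros; ring
    rw [h1, h2, h3]
    constructor <;> intro h <;> linarith
  -- candidate set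
  set V : Finset (Fin (n+2) → ℤ) :=
    (Fintype.piFinset fun _ : Fin (n+2) => Finset.Icc (-M) M).filter
      (fun v => ∃ i : Fin n, e i * v 1 - v i.succ.succ ≠ 0) with hV_def
  -- union bound inclusion
  have hsub : S.filter (fun b => ¬ P b) ⊆ V.biUnion (fun v => S.filter
      (fun b => ∑ i, b i * (e i * v 1 - v i.succ.succ) = v 0 + ∑ i, εv i * v i.succ.succ)) := by
    intro b hb
    rw [Finset.mem_filter] at hb
    obtain ⟨hbS, hnP⟩ := hb
    simp only [hP_def] at hnP
    push_neg at hnP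
    obtain ⟨v, hveq, hvne, hvnorm, hvnotmul⟩ := hnP
    -- each coordinate bounded
    have hcoord : ∀ j, -M ≤ v j ∧ v j ≤ M := by
      intro j
      have hsumnn : (0:ℝ) ≤ ∑ j', ((v j' : ℤ) : ℝ) ^ 2 :=
        Finset.sum_nonneg fun _ _ => sq_nonneg _
      have h1 : ((v j : ℤ) : ℝ) ^ 2 ≤ ∑ j', ((v j' : ℤ) : ℝ) ^ 2 :=
        Finset.single_le_sum (f := fun j' : Fin (n+2) => ((v j' : ℤ) : ℝ) ^ 2)
          (fun _ _ => sq_nonneg _) (Finset.mem_univ j)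
      have h2 : ∑ j', ((v j' : ℤ) : ℝ) ^ 2 ≤ m ^ 2 := by
        have := Real.sq_sqrt hsumnn
        nlinarith [Real.sqrt_nonneg (∑ j', ((v j' : ℤ) : ℝ) ^ 2)]
      have habs : |((v j : ℤ) : ℝ)| ≤ m := by
        rw [← Real.sqrt_sq_eq_abs, ← Real.sqrt_sq hm0]
        exact Real.sqrt_le_sqrt (by nlinarith)
      rw [abs_le] at habs
      constructor
      · have : (-(v j) : ℝ) ≤ m := by push_cast; linarith
        have h' : -(v j) ≤ M := Int.le_floor.2 (by exact_mod_cast this)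
        omega
      · exact Int.le_floor.2 (by exact_mod_cast habs.2)
    -- some coefficient is nonzero
    have hex : ∃ i : Fin n, e i * v 1 - v i.succ.succ ≠ 0 := by
      by_contra hcon
      push_neg at hcon
      apply hvnotmul (v 1)
      have hv2 : ∀ i : Fin n, v i.succ.succ = e i * v 1 := by
        intro i; have := hcon i; linarith
      have hsum0 : ∑ i, εv i * v i.succ.succ = (∑ i, εv i * e i) * v 1 := by
        rw [Finset.sum_mul]; apply Finset.sum_congr rfl
        intro i _; rw [hv2 i]; ring
      have hv0 : v 0 = -((∑ i, εv i * e i) * v 1) := by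
        have h := (heq b v).1 hveq
        have hz : ∑ i, b i * (e i * v 1 - v i.succ.succ) = 0 := by
          apply Finset.sum_eq_zero; intro i _; rw [hcon i]; ring
        rw [hz, hsum0] at h
        linarith
      funext j
      induction j using Fin.cases with
      | zero =>
        simp only [Pi.smul_apply, smul_eq_mul, Fin.cons_zero]
        rw [hv0]; ring
      | succ j =>
        induction j using Fin.cases with
        | zero =>
          simp only [Pi.smul_apply, smul_eq_mul, Fin.cons_succ, Fin.cons_zero, mul_one]
          rw [Fin.succ_zero_eq_one]
        | succ i =>
          simp only [Pi.smul_apply, smul_eq_mul, Fin.cons_succ]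
          rw [hv2 i]; ring
    rw [Finset.mem_biUnion]
    refine ⟨v, ?_, ?_⟩
    · rw [hV_def, Finset.mem_filter, Fintype.mem_piFinset]
      exact ⟨fun j => Finset.mem_Icc.2 (hcoord j), hex⟩
    · rw [Finset.mem_filter]
      exact ⟨hbS, (heq b v).1 hveq⟩
  -- cardinality bounds
  have hcardV : V.card ≤ (2*M+1).toNat ^ (n+2) := by
    calc V.card ≤ (Fintype.piFinset fun _ : Fin (n+2) => Finset.Icc (-M) M).card :=
          Finset.card_le_card (Finset.filter_subset _ _)
      _ = (2*M+1).toNat ^ (n+2) := by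
          rw [Fintype.card_piFinset]
          simp [Int.card_Icc]
          congr 1
          omega
  have hbadcard : (S.filter (fun b => ¬ P b)).card ≤ (2*M+1).toNat ^ (n+2) * B ^ (n-1) := by
    calc (S.filter (fun b => ¬ P b)).card
        ≤ (V.biUnion (fun v => S.filter (fun b =>
            ∑ i, b i * (e i * v 1 - v i.succ.succ) = v 0 + ∑ i, εv i * v i.succ.succ))).card :=
          Finset.card_le_card hsub
      _ ≤ ∑ v ∈ V, (S.filter (fun b =>
            ∑ i, b i * (e i * v 1 - v i.succ.succ) = v 0 + ∑ i, εv i * v i.succ.succ)).card :=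
          Finset.card_biUnion_le
      _ ≤ ∑ _v ∈ V, B ^ (n-1) := by
          apply Finset.sum_le_sum
          intro v hv
          rw [hV_def, Finset.mem_filter] at hv
          obtain ⟨_, i₀, hi₀⟩ := hv
          exact aux_card_linear B _ i₀ hi₀ _
      _ = V.card * B ^ (n-1) := by rw [Finset.sum_const, smul_eq_mul]
      _ ≤ (2*M+1).toNat ^ (n+2) * B ^ (n-1) := Nat.mul_le_mul_right _ hcardV
  -- S card
  have hScard : S.card = B ^ n := by
    rw [hS_def, Fintype.card_piFinset]
    simp [Int.card_Icc]
  have hsplit : (S.filter P).card + (S.filter (fun b => ¬ P b)).card = B ^ n := by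
    rw [← hScard]
    exact Finset.card_filter_add_card_filter_not (p := P)
  -- real-side estimates
  have hBn_pos : (0:ℝ) < (B:ℝ) ^ n := by positivity
  have h2M : ((2*M+1).toNat : ℝ) ≤ 2*m+1 := by
    have h1 : ((2*M+1).toNat : ℤ) = 2*M+1 := Int.toNat_of_nonneg (by omega)
    have h2 : ((2*M+1).toNat : ℝ) = 2*(M:ℝ)+1 := by exact_mod_cast congrArg (Int.cast : ℤ → ℝ) h1
    rw [h2]; linarith
  -- the analytic bound : (2m+1)^(n+2) ≤ 2 ^ ((1/2+ε/2) n²)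
  have hkey : (2*m+1) ^ (n+2) ≤ (2:ℝ) ^ ((1/2 + ε/2) * (n:ℝ)^2) := by
    have hstep1 : 2*m+1 ≤ (2:ℝ) ^ ((n:ℝ)/2 + (ε/4) * n) := by
      have hprod1 : (1:ℝ) ≤ (2:ℝ) ^ ((n:ℝ)/2) * (n:ℝ) ^ ((1:ℝ)/2) := by nlinarith
      have h6unused : 2*m+1 ≤ 7 * ((2:ℝ) ^ ((n:ℝ)/2) * (n:ℝ) ^ ((1:ℝ)/2)) := by
        rw [hm_def]; nlinarith
      have h7' : (7:ℝ) ≤ (2:ℝ) ^ ((ε/8) * n) := by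
        have : (7:ℝ) ≤ (n:ℝ) := by exact_mod_cast h7
        linarith
      have hsq : (n:ℝ) ^ ((1:ℝ)/2) ≤ (2:ℝ) ^ ((ε/8) * n) := by
        have h1 : (n:ℝ) ^ ((1:ℝ)/2) ≤ (n:ℝ) ^ (1:ℝ) :=
          Real.rpow_le_rpow_of_exponent_le hn1' (by norm_num)
        rw [Real.rpow_one] at h1
        linarith
      have h77 : 7 * (n:ℝ) ^ ((1:ℝ)/2) ≤ (2:ℝ) ^ ((ε/8) * n) * (2:ℝ) ^ ((ε/8) * n) :=
        mul_le_mul h7' hsq (by positivity) (by positivity)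
      calc 2*m+1 ≤ (7 * (n:ℝ) ^ ((1:ℝ)/2)) * (2:ℝ) ^ ((n:ℝ)/2) := by
            rw [hm_def]
            nlinarith [mul_le_mul hpow1 hsqrt1 zero_le_one (le_trans zero_le_one hpow1)]
        _ ≤ ((2:ℝ) ^ ((ε/8) * n) * (2:ℝ) ^ ((ε/8) * n)) * (2:ℝ) ^ ((n:ℝ)/2) :=
            mul_le_mul_of_nonneg_right h77 (by positivity)
        _ = (2:ℝ) ^ ((n:ℝ)/2 + (ε/4) * n) := by
            rw [← Real.rpow_add two_pos, ← Real.rpow_add two_pos]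
            congr 1
            ring
    have hLHS0 : (0:ℝ) ≤ 2*m+1 := by linarith
    calc (2*m+1) ^ (n+2) ≤ ((2:ℝ) ^ ((n:ℝ)/2 + (ε/4) * n)) ^ (n+2) :=
          pow_le_pow_left₀ hLHS0 hstep1 _
      _ = (2:ℝ) ^ (((n:ℝ)/2 + (ε/4) * n) * (n+2)) := by
          rw [← Real.rpow_natCast ((2:ℝ) ^ ((n:ℝ)/2 + (ε/4) * n)) (n+2),
            ← Real.rpow_mul (by norm_num)]
          congr 1
          push_cast
          ring
      _ ≤ (2:ℝ) ^ ((1/2 + ε/2) * (n:ℝ)^2) := by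
          apply Real.rpow_le_rpow_of_exponent_le one_le_two
          have hn0 : (0:ℝ) < (n:ℝ) := by linarith
          have h1 : ε * (4/ε + 2) ≤ ε * n := mul_le_mul_of_nonneg_left hbig hε.le
          have h2 : ε * (4/ε) = 4 := by field_simp
          have h3 : (0:ℝ) ≤ ε * n - 4 - 2*ε := by nlinarith
          nlinarith [mul_nonneg (le_of_lt hn0) h3]
  -- put everything together
  have hfilter_eq : ((S.filter P).card : ℝ) = (B:ℝ)^n - ((S.filter (fun b => ¬ P b)).card : ℝ) := by
    have h : ((S.filter P).card : ℝ) + ((S.filter (fun b => ¬ P b)).card : ℝ) = (B:ℝ)^n := by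
      exact_mod_cast congrArg (Nat.cast : ℕ → ℝ) hsplit
    linarith
  have hbadR : ((S.filter (fun b => ¬ P b)).card : ℝ)
      ≤ (2:ℝ) ^ ((1/2 + ε/2) * (n:ℝ)^2) * (B:ℝ)^(n-1) := by
    calc ((S.filter (fun b => ¬ P b)).card : ℝ)
        ≤ ((2*M+1).toNat : ℝ) ^ (n+2) * (B:ℝ)^(n-1) := by
          exact_mod_cast hbadcard
      _ ≤ (2*m+1) ^ (n+2) * (B:ℝ)^(n-1) := by
          apply mul_le_mul_of_nonneg_right _ (by positivity)
          exact pow_le_pow_left₀ (by positivity) h2M _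
      _ ≤ (2:ℝ) ^ ((1/2 + ε/2) * (n:ℝ)^2) * (B:ℝ)^(n-1) :=
          mul_le_mul_of_nonneg_right hkey (by positivity)
  -- B^n = B * B^(n-1)
  have hBpow : (B:ℝ)^n = (B:ℝ) * (B:ℝ)^(n-1) := by
    conv_lhs => rw [show n = (n-1) + 1 by omega]
    rw [pow_succ]; ring
  -- final bound on bad / B^n
  have hXB : (2:ℝ) ^ (-(ε * (n:ℝ)^2) / 2) * (B:ℝ) = (2:ℝ) ^ ((1/2 + ε/2) * (n:ℝ)^2) := by
    rw [hB, ← Real.rpow_add two_pos]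
    congr 1
    ring
  have hfinal : ((S.filter (fun b => ¬ P b)).card : ℝ)
      ≤ (2:ℝ) ^ (-(ε * (n:ℝ)^2) / 2) * (B:ℝ)^n := by
    calc ((S.filter (fun b => ¬ P b)).card : ℝ)
        ≤ (2:ℝ) ^ ((1/2 + ε/2) * (n:ℝ)^2) * (B:ℝ)^(n-1) := hbadR
      _ = ((2:ℝ) ^ (-(ε * (n:ℝ)^2) / 2) * (B:ℝ)) * (B:ℝ)^(n-1) := by rw [hXB]
      _ = (2:ℝ) ^ (-(ε * (n:ℝ)^2) / 2) * (B:ℝ)^n := by rw [hBpow]; ring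
  rw [hfilter_eq, one_mul, sub_div, div_self (ne_of_gt hBn_pos)]
  have hdiv : ((S.filter (fun b => ¬ P b)).card : ℝ) / (B:ℝ)^n
      ≤ (2:ℝ) ^ (-(ε * (n:ℝ)^2) / 2) := (div_le_iff₀ hBn_pos).2 hfinal
  linarith
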